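/- Combining the two previous facts: for φ_1,…,φ_K ∈ ℝ^d with ‖φ_k‖₂ ≤ C and Λ_k = λI + Σ_{j<k} φ_j φ_jᵀ (λ > 0), Σ_{k=1}^K min{1, ‖φ_k‖²_{Λ_k^{-1}}} ≤ 2d ln((C²K + λ)/λ). -/

import Mathlib

open Matrix Finset

lemma min_le_two_log {x : ℝ} (hx : 0 ≤ x) : min 1 x ≤ 2 * Real.log (1 + x) := by
  rcases le_or_gt x 1 with h | h
  · rw [min_eq_right h]
    have key : (1 - x/2) * Real.exp (x/2) ≤ 1 := by
      have h3 : 1 - x/2 ≤ Real.exp (-(x/2)) := by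
        have := Real.add_one_le_exp (-(x/2)); linarith
      have := mul_le_mul_of_nonneg_right h3 (Real.exp_pos (x/2)).le
      rwa [← Real.exp_add, neg_add_cancel, Real.exp_zero] at this
    have h2 : Real.exp (x/2) ≤ 1 + x := by
      nlinarith [key, mul_nonneg hx (sub_nonneg.mpr h), Real.exp_pos (x/2)]
    have := Real.log_le_log (Real.exp_pos _) h2
    rw [Real.log_exp] at this; linarith
  · rw [min_eq_left h.le]
    have : Real.log 2 ≤ Real.log (1 + x) :=
      Real.log_le_log (by norm_num) (by linarith)
    have h2 := Real.log_two_gt_d9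
    linarith

lemma psd_vmv {d : ℕ} (v : Fin d → ℝ) : (Matrix.vecMulVec v v).PosSemidef := by
  refine Matrix.PosSemidef.of_dotProduct_mulVec_nonneg ?_ ?_
  · ext i j; simp [Matrix.vecMulVec_apply, Matrix.IsHermitian, mul_comm]
  · intro x
    have : star x ⬝ᵥ (Matrix.vecMulVec v v *ᵥ x) = (v ⬝ᵥ x) * (v ⬝ᵥ x) := by
      simp [dotProduct, Matrix.mulVec, Matrix.vecMulVec_apply, Finset.mul_sum,
        Finset.sum_mul, mul_assoc, mul_comm, mul_left_comm]
    rw [this]; exact mul_self_nonneg _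

theorem stmt6 (d K : ℕ) (lam C : ℝ) (hlam : 0 < lam) (hC : 0 ≤ C)
    (φ : ℕ → Fin d → ℝ)
    (hφ : ∀ k, Real.sqrt (∑ i, (φ k i) ^ 2) ≤ C)
    (Λ : ℕ → Matrix (Fin d) (Fin d) ℝ)
    (hΛ : ∀ k, Λ k = lam • (1 : Matrix (Fin d) (Fin d) ℝ) +
        ∑ j ∈ Finset.range k, Matrix.vecMulVec (φ j) (φ j)) :
    ∑ k ∈ Finset.range K, min 1 (φ k ⬝ᵥ ((Λ k)⁻¹ *ᵥ φ k)) ≤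
      2 * d * Real.log ((C ^ 2 * K + lam) / lam) := by
  -- positive semidefiniteness of the sums
  have hS : ∀ k, (∑ j ∈ Finset.range k, Matrix.vecMulVec (φ j) (φ j)).PosSemidef := by
    intro k
    exact Finset.sum_induction _ _ (fun a b ha hb => ha.add hb) Matrix.PosSemidef.zero
      (fun j _ => psd_vmv (φ j))
  have hpos : ∀ k, (Λ k).PosDef := by
    intro k
    rw [hΛ k, Matrix.smul_one_eq_diagonal]
    exact (Matrix.PosDef.diagonal (fun _ => hlam)).add_posSemidef (hS k)
  set x : ℕ → ℝ := fun k => φ k ⬝ᵥ ((Λ k)⁻¹ *ᵥ φ k) with hxdef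
  have hx0 : ∀ k, 0 ≤ x k := by
    intro k
    have := ((hpos k).inv).posSemidef.dotProduct_mulVec_nonneg (φ k)
    simpa using this
  -- determinant recursion
  have hdetstep : ∀ k, (Λ (k+1)).det = (Λ k).det * (1 + x k) := by
    intro k
    have hΛsucc : Λ (k+1) = Λ k + Matrix.vecMulVec (φ k) (φ k) := by
      rw [hΛ, hΛ, Finset.sum_range_succ, add_assoc]
    rw [hΛsucc, Matrix.vecMulVec_eq Unit,
      Matrix.det_add_replicateCol_mul_replicateRow (hpos k).det_pos.ne'.isUnit]
    congr 1
    rw [Matrix.det_unique]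
    simp only [Matrix.add_apply, Matrix.one_apply, Matrix.mul_apply, Matrix.replicateRow_apply,
      Matrix.replicateCol_apply, Finset.sum_mul, if_true, Finset.mul_sum]
    rw [Finset.sum_comm]
    simp [hxdef, dotProduct, Matrix.mulVec, Finset.mul_sum, mul_assoc]
  have hdet0 : (Λ 0).det = lam ^ d := by
    rw [hΛ 0, Finset.range_zero, Finset.sum_empty, add_zero, Matrix.smul_one_eq_diagonal,
      Matrix.det_diagonal]
    simp [Finset.prod_const, Finset.card_univ]
  have hdetprod : ∀ k, (Λ k).det = lam ^ d * ∏ j ∈ Finset.range k, (1 + x j) := by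
    intro k
    induction k with
    | zero => simpa using hdet0
    | succ n ih => rw [hdetstep n, ih, Finset.prod_range_succ]; ring
  -- trace bound
  have hnormsq : ∀ j, (∑ i, (φ j i) ^ 2) ≤ C ^ 2 := by
    intro j
    have h1 : (0:ℝ) ≤ ∑ i, (φ j i) ^ 2 := Finset.sum_nonneg fun i _ => sq_nonneg _
    have := pow_le_pow_left₀ (Real.sqrt_nonneg _) (hφ j) 2
    rwa [Real.sq_sqrt h1] at this
  have htr : (Λ K).trace ≤ lam * d + C ^ 2 * K := by
    rw [hΛ K, Matrix.trace_add, Matrix.trace_smul, Matrix.trace_one, Matrix.trace_sum]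
    have h1 : ∀ j, (Matrix.vecMulVec (φ j) (φ j)).trace = ∑ i, (φ j i) ^ 2 := by
      intro j; simp [Matrix.trace, Matrix.diag, Matrix.vecMulVec_apply, sq]
    have h2 : ∑ j ∈ Finset.range K, (Matrix.vecMulVec (φ j) (φ j)).trace ≤ C ^ 2 * K := by
      calc ∑ j ∈ Finset.range K, (Matrix.vecMulVec (φ j) (φ j)).trace
          ≤ ∑ j ∈ Finset.range K, C ^ 2 := by
            apply Finset.sum_le_sum; intro j _; rw [h1 j]; exact hnormsq j
        _ = C ^ 2 * K := by simp [mul_comm]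
    simp only [smul_eq_mul, Fintype.card_fin]
    linarith
  -- eigenvalue bounds
  have hH := (hpos K).isHermitian
  have hμlam : ∀ i, lam ≤ hH.eigenvalues i := by
    intro i
    set v : Fin d → ℝ := ⇑(hH.eigenvectorBasis i) with hv
    have hn : ‖hH.eigenvectorBasis i‖ = 1 := hH.eigenvectorBasis.orthonormal.1 i
    have hvv : ∑ j, v j ^ 2 = 1 := by
      have h2 := EuclideanSpace.norm_eq (hH.eigenvectorBasis i)
      rw [hn] at h2
      have h3 : ∑ j, ‖hH.eigenvectorBasis i j‖ ^ 2 = 1 := by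
        have := Real.sqrt_eq_one.mp h2.symm
        exact this
      simpa [Real.norm_eq_abs, sq_abs] using h3
    have heig := hH.eigenvalues_eq i
    rw [heig]
    have hexp : star v ⬝ᵥ ((Λ K) *ᵥ v) =
        lam * (∑ j, v j ^ 2) + star v ⬝ᵥ
          ((∑ j ∈ Finset.range K, Matrix.vecMulVec (φ j) (φ j)) *ᵥ v) := by
      rw [hΛ K]
      rw [Matrix.add_mulVec, dotProduct_add, Matrix.smul_mulVec,
        Matrix.one_mulVec, dotProduct_smul]
      congr 1
      simp [dotProduct, sq, smul_eq_mul, Finset.mul_sum]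
    have hq := (hS K).dotProduct_mulVec_nonneg v
    simp only [star_trivial] at hq
    simp only [RCLike.re_to_real]
    rw [hexp, hvv]
    simpa using by linarith [hq]
  have hsum_eig : ∑ i, hH.eigenvalues i = (Λ K).trace := by
    conv_rhs => rw [hH.spectral_theorem]
    rw [Unitary.conjStarAlgAut_apply, Matrix.trace_mul_cycle]
    rw [Unitary.coe_star_mul_self, one_mul, Matrix.trace_diagonal]
    simp
  have hμupper : ∀ i, hH.eigenvalues i ≤ C ^ 2 * K + lam := by
    intro i
    have hcard : ((Finset.univ.erase i).card : ℝ) = (d : ℝ) - 1 := by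
      rw [Finset.card_erase_of_mem (Finset.mem_univ i), Finset.card_univ, Fintype.card_fin]
      have hd : 1 ≤ d := Nat.one_le_iff_ne_zero.mpr (by rintro rfl; exact i.elim0)
      push_cast [Nat.cast_sub hd]
      ring
    have h2 : ∑ j ∈ Finset.univ.erase i, lam ≤ ∑ j ∈ Finset.univ.erase i, hH.eigenvalues j :=
      Finset.sum_le_sum fun j _ => hμlam j
    have h3 : hH.eigenvalues i + ∑ j ∈ Finset.univ.erase i, hH.eigenvalues j
        = ∑ j, hH.eigenvalues j := Finset.add_sum_erase _ _ (Finset.mem_univ i)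
    have h4 : ∑ j ∈ Finset.univ.erase i, lam = ((d : ℝ) - 1) * lam := by
      rw [Finset.sum_const, nsmul_eq_mul, hcard]
    rw [hsum_eig] at h3
    nlinarith [htr, h2, h3, h4]
  have hdet_le : (Λ K).det ≤ (C ^ 2 * K + lam) ^ d := by
    rw [hH.det_eq_prod_eigenvalues]
    have : ∏ i, hH.eigenvalues i ≤ ∏ (i : Fin d), (C ^ 2 * K + lam) := by
      apply Finset.prod_le_prod
      · exact fun i _ => le_trans hlam.le (hμlam i)
      · exact fun i _ => hμupper i
    simpa [Finset.prod_const, Finset.card_univ] using this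
  -- combine
  have h1xpos : ∀ k, (0:ℝ) < 1 + x k := fun k => by linarith [hx0 k]
  have hprodpos : (0:ℝ) < ∏ j ∈ Finset.range K, (1 + x j) :=
    Finset.prod_pos fun j _ => h1xpos j
  have hprod_le : ∏ j ∈ Finset.range K, (1 + x j) ≤ ((C ^ 2 * K + lam) / lam) ^ d := by
    have h5 : lam ^ d * ∏ j ∈ Finset.range K, (1 + x j) ≤ (C ^ 2 * K + lam) ^ d := by
      rw [← hdetprod K]; exact hdet_le
    rw [div_pow]
    rw [le_div_iff₀ (by positivity)]
    linarith [h5]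
  calc ∑ k ∈ Finset.range K, min 1 (x k)
      ≤ ∑ k ∈ Finset.range K, 2 * Real.log (1 + x k) :=
        Finset.sum_le_sum fun k _ => min_le_two_log (hx0 k)
    _ = 2 * Real.log (∏ j ∈ Finset.range K, (1 + x j)) := by
        rw [Real.log_prod (fun j _ => (h1xpos j).ne'), Finset.mul_sum]
    _ ≤ 2 * Real.log (((C ^ 2 * K + lam) / lam) ^ d) := by
        have := Real.log_le_log hprodpos hprod_le
        linarith
    _ = 2 * d * Real.log ((C ^ 2 * K + lam) / lam) := by
        rw [Real.log_pow]; ring
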